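/- If φ is an automorphism of NF_n with φ(e₁) = Σ_{i=1}^n α_i e_i (α₁ ≠ 0), then φ(e_j) = α₁^{j−1} Σ_{i=1}^{n+1−j} α_i e_{i+j−1} for all 2 ≤ j ≤ n. Consequently an automorphism of NF_n is uniquely determined by its value at e₁, and every 2-local automorphism of NF_n is an automorphism. -/
import Mathlib


/-- The bracket of the null-filiform Leibniz algebra `NF_n` on `Fin n → ℂ`:
`[e_i, e_1] = e_{i+1}` (0-indexed: `[e_i, e_0] = e_{i+1}`), all other basis products zero. -/
def nfMul (n : ℕ) (x y : Fin n → ℂ) : Fin n → ℂ :=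
  fun k =>
    if hk : (k : ℕ) = 0 then 0
    else x ⟨(k : ℕ) - 1, by have := k.isLt; omega⟩ * y ⟨0, by have := k.isLt; omega⟩

lemma nf_single_succ (n : ℕ) (hn : 0 < n) (m : ℕ) (hm : m + 1 < n) :
    (Pi.single (⟨m + 1, hm⟩ : Fin n) 1 : Fin n → ℂ) =
      nfMul n (Pi.single (⟨m, by omega⟩ : Fin n) 1) (Pi.single (⟨0, hn⟩ : Fin n) 1) := by
  funext k
  simp only [nfMul]
  by_cases hk : (k : ℕ) = 0
  · rw [dif_pos hk]
    rw [Pi.single_apply, if_neg]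
    intro h
    rw [Fin.ext_iff] at h
    simp at h
    omega
  · rw [dif_neg hk]
    simp only [Pi.single_apply, Fin.ext_iff, Fin.val_mk]
    split_ifs <;> first | ring1 | (exfalso; omega)

lemma nf_keyA (n : ℕ) (hn : 0 < n) (ψ : (Fin n → ℂ) ≃ₗ[ℂ] (Fin n → ℂ))
    (hψ : ∀ x y : Fin n → ℂ, ψ (nfMul n x y) = nfMul n (ψ x) (ψ y)) :
    ∀ (m : ℕ) (hm : m < n) (kk : ℕ) (hkk : kk < n),
      ψ (Pi.single (⟨m, hm⟩ : Fin n) 1) ⟨kk, hkk⟩ =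
        if m ≤ kk then
          (ψ (Pi.single (⟨0, hn⟩ : Fin n) 1) ⟨0, hn⟩) ^ m *
            ψ (Pi.single (⟨0, hn⟩ : Fin n) 1) ⟨kk - m, by omega⟩
        else 0 := by
  intro m
  induction m with
  | zero =>
    intro hm kk hkk
    rw [if_pos (Nat.zero_le _), pow_zero, one_mul]
    rfl
  | succ m ih =>
    intro hm kk hkk
    rw [nf_single_succ n hn m hm, hψ]
    simp only [nfMul, Fin.val_mk]
    by_cases hk : kk = 0
    · rw [dif_pos hk, if_neg (by omega)]
    · rw [dif_neg hk]
      rw [ih (by omega) (kk - 1) (by omega)]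
      by_cases h : m + 1 ≤ kk
      · rw [if_pos (by omega), if_pos h]
        have heq : (⟨kk - 1 - m, by omega⟩ : Fin n) =
            ⟨kk - (m + 1), by omega⟩ := Fin.mk_eq_mk.mpr (by omega)
        rw [heq]
        ring
      · rw [if_neg (by omega), if_neg h, zero_mul]

lemma nf_keyB (n : ℕ) (hn : 0 < n) (ψ φ : (Fin n → ℂ) ≃ₗ[ℂ] (Fin n → ℂ))
    (hψ : ∀ x y : Fin n → ℂ, ψ (nfMul n x y) = nfMul n (ψ x) (ψ y))
    (hφ : ∀ x y : Fin n → ℂ, φ (nfMul n x y) = nfMul n (φ x) (φ y))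
    (h0 : ψ (Pi.single (⟨0, hn⟩ : Fin n) 1) = φ (Pi.single (⟨0, hn⟩ : Fin n) 1)) :
    ∀ x : Fin n → ℂ, ψ x = φ x := by
  have hbasis : ∀ j : Fin n, ψ (Pi.single j 1) = φ (Pi.single j 1) := by
    intro j
    funext k
    have h1 := nf_keyA n hn ψ hψ j.val j.isLt k.val k.isLt
    have h2 := nf_keyA n hn φ hφ j.val j.isLt k.val k.isLt
    rw [Fin.eta, Fin.eta] at h1 h2
    rw [h1, h2, h0]
  intro x
  have hx : x = ∑ i : Fin n, x i • (Pi.single i 1 : Fin n → ℂ) := by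
    funext k
    simp [Finset.sum_apply, Pi.single_apply]
  rw [hx, map_sum, map_sum]
  simp only [map_smul, hbasis]

/-- If `φ` is an automorphism of `NF_n` with `φ(e₁) = ∑ αᵢ eᵢ` (`α₁ ≠ 0`), then
`φ(e_j) = α₁^{j-1} ∑_{i=1}^{n+1-j} α_i e_{i+j-1}` for `2 ≤ j ≤ n` (0-indexed below);
consequently an automorphism is determined by its value at `e₁`, and every 2-local
automorphism of `NF_n` is an automorphism. -/
theorem stmt_10 (n : ℕ) (hn : 0 < n)
    (φ : (Fin n → ℂ) ≃ₗ[ℂ] (Fin n → ℂ))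
    (hφ : ∀ x y : Fin n → ℂ, φ (nfMul n x y) = nfMul n (φ x) (φ y))
    (α : Fin n → ℂ)
    (hα : φ (Pi.single (⟨0, hn⟩ : Fin n) 1) = ∑ i : Fin n, α i • (Pi.single i 1 : Fin n → ℂ))
    (hα0 : α ⟨0, hn⟩ ≠ 0) :
    (∀ j k : Fin n, 0 < (j : ℕ) →
      φ (Pi.single j 1) k =
        if (j : ℕ) ≤ (k : ℕ) then
          α ⟨0, hn⟩ ^ (j : ℕ) * α ⟨(k : ℕ) - (j : ℕ), by have := k.isLt; omega⟩
        else 0) ∧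
    (∀ ψ : (Fin n → ℂ) ≃ₗ[ℂ] (Fin n → ℂ),
      (∀ x y : Fin n → ℂ, ψ (nfMul n x y) = nfMul n (ψ x) (ψ y)) →
      ψ (Pi.single (⟨0, hn⟩ : Fin n) 1) = φ (Pi.single (⟨0, hn⟩ : Fin n) 1) →
      ∀ x : Fin n → ℂ, ψ x = φ x) ∧
    (∀ Δ : (Fin n → ℂ) → (Fin n → ℂ),
      (∀ x y : Fin n → ℂ, ∃ ψ : (Fin n → ℂ) ≃ₗ[ℂ] (Fin n → ℂ),
        (∀ u v : Fin n → ℂ, ψ (nfMul n u v) = nfMul n (ψ u) (ψ v)) ∧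
        ψ x = Δ x ∧ ψ y = Δ y) →
      ∃ ψ : (Fin n → ℂ) ≃ₗ[ℂ] (Fin n → ℂ),
        (∀ u v : Fin n → ℂ, ψ (nfMul n u v) = nfMul n (ψ u) (ψ v)) ∧
        ∀ x : Fin n → ℂ, Δ x = ψ x) := by
  have hval : ∀ i : Fin n, φ (Pi.single (⟨0, hn⟩ : Fin n) 1) i = α i := by
    intro i
    rw [hα]
    simp [Finset.sum_apply, Pi.single_apply]
  refine ⟨?_, ?_, ?_⟩
  · intro j k _
    have h1 := nf_keyA n hn φ hφ j.val j.isLt k.val k.isLt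
    rw [Fin.eta, Fin.eta] at h1
    rw [h1, hval, hval]
  · intro ψ hψ h0
    exact nf_keyB n hn ψ φ hψ hφ h0
  · intro Δ h2loc
    obtain ⟨ψ₀, hψ₀, hψ₀e, -⟩ :=
      h2loc (Pi.single (⟨0, hn⟩ : Fin n) 1) (Pi.single (⟨0, hn⟩ : Fin n) 1)
    refine ⟨ψ₀, hψ₀, fun x => ?_⟩
    obtain ⟨ψx, hψx, hψxe, hψxx⟩ := h2loc (Pi.single (⟨0, hn⟩ : Fin n) 1) x
    rw [← hψxx]
    exact nf_keyB n hn ψx ψ₀ hψx hψ₀ (hψxe.trans hψ₀e.symm) x
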